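/- arXiv:1511.01263 — 3 statements merged into one kernel-verified Lean document; each statement's English description precedes it below -/
import Mathlib

section
/- For t ≠ 0 and φ ∈ 𝒮(ℝ), the remainder A_φ(t,x) = e^{it∂ₓₓ}φ(x) - (2it)^{-1/2} e^{ix²/(4t)} φ̂(x/(2t)) satisfies, for every 0 < β < 1/4, ‖A_φ(t,·)‖_{L^∞} ≲ |t|^{-1/2-β} ‖⟨x⟩φ‖_{L²(ℝ)}. -/
open MeasureTheory Real
open scoped ENNReal NNReal

/-- Fourier transform with convention `φ̂(ξ) = (2π)^{-1/2} ∫ e^{-ixξ} φ(x) dx`. -/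
noncomputable def ft (φ : ℝ → ℂ) (ξ : ℝ) : ℂ :=
  (1 / Real.sqrt (2 * π) : ℝ) * ∫ x : ℝ, Complex.exp (-(Complex.I) * x * ξ) * φ x

/-- The free Schrödinger evolution `e^{it∂ₓₓ}φ = K_t * φ`,
with `K_t(x) = (4iπt)^{-1/2} e^{-x²/(4it)}`. -/
noncomputable def schrod (t : ℝ) (φ : ℝ → ℂ) (x : ℝ) : ℂ :=
  ∫ y : ℝ, (4 * (π : ℂ) * Complex.I * t) ^ (-(1 / 2) : ℂ) *
    Complex.exp (Complex.I * ((x : ℂ) - y) ^ 2 / (4 * t)) * φ y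

/-- The remainder `A_φ(t,x) = e^{it∂ₓₓ}φ(x) - (2it)^{-1/2} e^{ix²/(4t)} φ̂(x/(2t))`. -/
noncomputable def remA (t : ℝ) (φ : ℝ → ℂ) (x : ℝ) : ℂ :=
  schrod t φ x -
    (2 * Complex.I * t) ^ (-(1 / 2) : ℂ) * Complex.exp (Complex.I * x ^ 2 / (4 * t)) *
      ft φ (x / (2 * t))

lemma real_mul_cpow {a : ℝ} (ha : 0 < a) {z : ℂ} (hz : z ≠ 0) (w : ℂ) :
    ((a : ℂ) * z) ^ w = (a : ℂ) ^ w * z ^ w := by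
  have ha' : (a : ℂ) ≠ 0 := Complex.ofReal_ne_zero.mpr ha.ne'
  rw [Complex.cpow_def_of_ne_zero (mul_ne_zero ha' hz),
    Complex.cpow_def_of_ne_zero ha', Complex.cpow_def_of_ne_zero hz,
    ← Complex.exp_add, Complex.log_ofReal_mul ha hz, Complex.ofReal_log ha.le, add_mul]

lemma exp_I_sub_one_le {θ β : ℝ} (hβ0 : 0 < β) (hβ1 : β ≤ 1) :
    ‖Complex.exp (Complex.I * θ) - 1‖ ≤ 2 * |θ| ^ β := by
  have hIθ : Complex.I * (θ : ℂ) = (θ : ℂ) * Complex.I := by ring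
  rcases eq_or_ne θ 0 with rfl | hθ0
  · simp [Real.zero_rpow hβ0.ne']
  rcases le_or_gt |θ| 1 with h | h
  · have h1 : ‖Complex.exp (Complex.I * θ) - 1‖ ≤ 2 * |θ| := by
      have habs : ‖Complex.I * (θ:ℂ)‖ = |θ| := by
        simp
      have := Complex.norm_exp_sub_one_le (x := Complex.I * θ) (by rw [habs]; exact h)
      simpa [habs] using this
    refine h1.trans ?_
    have : |θ| ≤ |θ| ^ β := by
      calc |θ| = |θ| ^ (1:ℝ) := (Real.rpow_one _).symm
      _ ≤ |θ| ^ β := Real.rpow_le_rpow_of_exponent_ge (abs_pos.mpr hθ0) h hβ1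
    linarith
  · have h1 : ‖Complex.exp (Complex.I * θ) - 1‖ ≤ 2 := by
      have : ‖Complex.exp (Complex.I * θ)‖ = 1 := by
        rw [hIθ, Complex.norm_exp_ofReal_mul_I]
      calc ‖Complex.exp (Complex.I * θ) - 1‖ ≤ ‖Complex.exp (Complex.I * θ)‖ + ‖(1:ℂ)‖ :=
        norm_sub_le _ _
      _ = 2 := by rw [this]; norm_num
    refine h1.trans ?_
    have : (1:ℝ) ≤ |θ| ^ β := Real.one_le_rpow h.le hβ0.le
    linarith

lemma const_split {t : ℝ} (ht : t ≠ 0) :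
    (2 * Complex.I * (t:ℂ)) ^ (-(1/2) : ℂ) * ((1 / Real.sqrt (2*π) : ℝ) : ℂ)
      = (4 * (π:ℂ) * Complex.I * t) ^ (-(1/2) : ℂ) := by
  have h2π : (0:ℝ) < 2*π := by positivity
  have hz : (2 * Complex.I * (t:ℂ)) ≠ 0 := by
    apply mul_ne_zero (mul_ne_zero two_ne_zero Complex.I_ne_zero)
    exact Complex.ofReal_ne_zero.mpr ht
  have h4 : (4 * (π:ℂ) * Complex.I * t) = ((2*π : ℝ):ℂ) * (2 * Complex.I * t) := by
    push_cast; ring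
  rw [h4, real_mul_cpow h2π hz]
  rw [show (-(1/2) : ℂ) = ((-(1/2) : ℝ) : ℂ) by norm_num]
  rw [← Complex.ofReal_cpow h2π.le]
  have : ((2*π : ℝ) ^ (-(1/2) : ℝ) : ℝ) = (1 / Real.sqrt (2*π) : ℝ) := by
    rw [Real.rpow_neg h2π.le, Real.sqrt_eq_rpow]; norm_num
  rw [this, mul_comm]

lemma norm_c {t : ℝ} (ht : t ≠ 0) :
    ‖(4 * (π:ℂ) * Complex.I * t) ^ (-(1/2) : ℂ)‖ = (4*π*|t|) ^ (-(1/2) : ℝ) := by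
  have hz : (4 * (π:ℂ) * Complex.I * t) ≠ 0 := by
    apply mul_ne_zero (mul_ne_zero (mul_ne_zero (by norm_num) _) Complex.I_ne_zero)
    · exact Complex.ofReal_ne_zero.mpr ht
    · exact Complex.ofReal_ne_zero.mpr Real.pi_ne_zero
  rw [Complex.norm_cpow_of_ne_zero hz]
  have habs : ‖(4 * (π:ℂ) * Complex.I * t)‖ = 4*π*|t| := by
    rw [norm_mul, norm_mul, norm_mul]
    simp [abs_of_pos Real.pi_pos]
  rw [habs]
  simp

lemma Afin {β : ℝ} (hβ0 : 0 < β) (hβ1 : β < 1/4) :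
    (∫⁻ y : ℝ, (ENNReal.ofReal ((1+y^2) ^ (β - 1/2 : ℝ))) ^ (2:ℝ)) ≠ ⊤ := by
  have hexp : (1:ℝ) < 2 - 4*β := by linarith
  have hint : Integrable (fun y : ℝ => (2:ℝ)^((1:ℝ)-2*β) * (1+‖y‖) ^ (-((2:ℝ)-4*β))) :=
    (integrable_one_add_norm (E := ℝ) (r := (2:ℝ)-4*β) (by simpa using hexp)).const_mul _
  refine ne_of_lt (lt_of_le_of_lt (lintegral_mono fun y => ?_) hint.lintegral_lt_top)
  rw [ENNReal.ofReal_rpow_of_nonneg (by positivity) (by norm_num)]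
  rw [show ((1:ℝ)+‖y‖) ^ (-((2:ℝ)-4*β)) = (((1:ℝ)+‖y‖) ^ ((2:ℝ)-4*β))⁻¹ from
      Real.rpow_neg (by positivity) _]
  apply ENNReal.ofReal_le_ofReal
  have ha : (0:ℝ) < 1 + y^2 := by positivity
  have hb : (0:ℝ) < 1 + ‖y‖ := by positivity
  have hr : ((1+y^2) ^ (β - 1/2 : ℝ)) ^ (2:ℝ) = (1+y^2) ^ ((2:ℝ)*β - 1) := by
    rw [← Real.rpow_mul ha.le]; congr 1; ring
  rw [hr]
  have hap : (0:ℝ) < (1+y^2) ^ ((1:ℝ)-2*β) := Real.rpow_pos_of_pos ha _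
  have hbp : (0:ℝ) < (1+‖y‖) ^ ((2:ℝ)-4*β) := Real.rpow_pos_of_pos hb _
  have h1 : (1+‖y‖) ^ ((2:ℝ)-4*β) ≤ 2^((1:ℝ)-2*β) * (1+y^2) ^ ((1:ℝ)-2*β) := by
    have hb2 : (1+‖y‖)^(2:ℕ) ≤ 2*(1+y^2) := by
      have : ‖y‖^2 = y^2 := by rw [Real.norm_eq_abs, sq_abs]
      nlinarith [norm_nonneg y, sq_nonneg (‖y‖ - 1)]
    calc (1+‖y‖) ^ ((2:ℝ)-4*β) = ((1+‖y‖)^(2:ℕ)) ^ ((1:ℝ)-2*β) := by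
          rw [← Real.rpow_natCast (1+‖y‖) 2, ← Real.rpow_mul hb.le]; congr 1; push_cast; ring
    _ ≤ (2*(1+y^2)) ^ ((1:ℝ)-2*β) := Real.rpow_le_rpow (by positivity) hb2 (by linarith)
    _ = 2^((1:ℝ)-2*β) * (1+y^2) ^ ((1:ℝ)-2*β) := Real.mul_rpow (by norm_num) ha.le
  have h2 : (1+y^2) ^ ((2:ℝ)*β - 1) = ((1+y^2) ^ ((1:ℝ)-2*β))⁻¹ := by
    rw [show (2:ℝ)*β - 1 = -((1:ℝ)-2*β) by ring, Real.rpow_neg ha.le]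
  rw [h2, show (2:ℝ)^((1:ℝ)-2*β) * ((1+‖y‖) ^ ((2:ℝ)-4*β))⁻¹
      = 2^((1:ℝ)-2*β) / (1+‖y‖) ^ ((2:ℝ)-4*β) by ring, ← one_div,
    div_le_div_iff₀ hap hbp]
  linarith

lemma eLpNorm_weight_ne_top (φ : SchwartzMap ℝ ℂ) :
    eLpNorm (fun y : ℝ => Real.sqrt (1 + y ^ 2) • φ y) 2 (volume : Measure ℝ) ≠ ⊤ := by
  obtain ⟨C0, hC0, h0⟩ := φ.decay 0 0
  obtain ⟨C2, hC2, h2⟩ := φ.decay 2 0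
  have hbound : ∀ y : ℝ, (1 + y^2) * ‖φ y‖ ≤ C0 + C2 := by
    intro y
    have e0 := h0 y
    have e2 := h2 y
    simp only [pow_zero, one_mul, norm_iteratedFDeriv_zero] at e0 e2
    have hn : ‖y‖^2 = y^2 := by rw [Real.norm_eq_abs, sq_abs]
    rw [hn] at e2
    nlinarith [norm_nonneg (φ y)]
  rw [eLpNorm_eq_lintegral_rpow_enorm_toReal (by norm_num) (by norm_num)]
  refine ne_of_lt (ENNReal.rpow_lt_top_of_nonneg (by norm_num) ?_)
  have hint : Integrable (fun y : ℝ => (C0+C2)^2 * (1+y^2)⁻¹) :=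
    integrable_inv_one_add_sq.const_mul _
  refine ne_of_lt (lt_of_le_of_lt (lintegral_mono fun y => ?_) hint.lintegral_lt_top)
  rw [← ofReal_norm, ENNReal.ofReal_rpow_of_nonneg (norm_nonneg _) (by norm_num)]
  apply ENNReal.ofReal_le_ofReal
  have hs : (0:ℝ) < 1 + y^2 := by positivity
  have hn : ‖Real.sqrt (1+y^2) • φ y‖ = Real.sqrt (1+y^2) * ‖φ y‖ := by
    rw [norm_smul, Real.norm_eq_abs, abs_of_nonneg (Real.sqrt_nonneg _)]
  have htoReal : ((2:ℝ≥0∞).toReal) = (2:ℝ) := by norm_num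
  rw [htoReal, hn, Real.rpow_two, mul_pow, Real.sq_sqrt hs.le,
    show (C0+C2)^2 * (1+y^2)⁻¹ = (C0+C2)^2 / (1+y^2) from by ring, le_div_iff₀ hs]
  nlinarith [hbound y, mul_nonneg hs.le (norm_nonneg (φ y)), hs]

lemma remA_eq (φ : SchwartzMap ℝ ℂ) {t : ℝ} (ht : t ≠ 0) (x : ℝ) :
    remA t (fun y => φ y) x = ∫ y : ℝ, (4 * (π:ℂ) * Complex.I * t) ^ (-(1/2) : ℂ) *
      Complex.exp (Complex.I * (x:ℂ)^2 / (4*t)) *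
      ((Complex.exp (Complex.I * (y:ℂ)^2 / (4*t)) - 1) *
        (Complex.exp (-Complex.I * y * ((x/(2*t) : ℝ):ℂ)) * φ y)) := by
  have htc : (t:ℂ) ≠ 0 := Complex.ofReal_ne_zero.mpr ht
  have meas1 : AEStronglyMeasurable
      (fun y : ℝ => (4 * (π:ℂ) * Complex.I * t) ^ (-(1/2) : ℂ) *
        Complex.exp (Complex.I * ((x:ℂ) - y)^2 / (4*t))) volume := by
    apply Continuous.aestronglyMeasurable
    fun_prop
  have hb1 : ∀ y : ℝ, ‖(4 * (π:ℂ) * Complex.I * t) ^ (-(1/2) : ℂ) *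
      Complex.exp (Complex.I * ((x:ℂ) - y)^2 / (4*t))‖
      ≤ ‖(4 * (π:ℂ) * Complex.I * t) ^ (-(1/2) : ℂ)‖ := by
    intro y
    rw [norm_mul, show Complex.I * ((x:ℂ) - y)^2 / (4*(t:ℂ))
        = (((x-y)^2/(4*t) : ℝ) : ℂ) * Complex.I from (by push_cast; ring),
      Complex.norm_exp_ofReal_mul_I, mul_one]
  have hint1 : Integrable (fun y : ℝ => (4 * (π:ℂ) * Complex.I * t) ^ (-(1/2) : ℂ) *
      Complex.exp (Complex.I * ((x:ℂ) - y)^2 / (4*t)) * φ y) volume :=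
    (φ.integrable).bdd_mul meas1 (Filter.Eventually.of_forall hb1)
  have meas2 : AEStronglyMeasurable
      (fun y : ℝ => ((4 * (π:ℂ) * Complex.I * t) ^ (-(1/2) : ℂ) *
        Complex.exp (Complex.I * (x:ℂ)^2 / (4*t))) *
        Complex.exp (-Complex.I * y * ((x/(2*t) : ℝ):ℂ))) volume := by
    apply Continuous.aestronglyMeasurable
    fun_prop
  have hb2 : ∀ y : ℝ, ‖((4 * (π:ℂ) * Complex.I * t) ^ (-(1/2) : ℂ) *
      Complex.exp (Complex.I * (x:ℂ)^2 / (4*t))) *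
      Complex.exp (-Complex.I * y * ((x/(2*t) : ℝ):ℂ))‖
      ≤ ‖(4 * (π:ℂ) * Complex.I * t) ^ (-(1/2) : ℂ) *
        Complex.exp (Complex.I * (x:ℂ)^2 / (4*t))‖ := by
    intro y
    rw [norm_mul, show -Complex.I * (y:ℂ) * ((x/(2*t) : ℝ):ℂ)
        = ((-(y * (x/(2*t))) : ℝ) : ℂ) * Complex.I from (by push_cast; ring),
      Complex.norm_exp_ofReal_mul_I, mul_one]
  have hint2 : Integrable (fun y : ℝ => ((4 * (π:ℂ) * Complex.I * t) ^ (-(1/2) : ℂ) *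
      Complex.exp (Complex.I * (x:ℂ)^2 / (4*t))) *
      (Complex.exp (-Complex.I * y * ((x/(2*t) : ℝ):ℂ)) * φ y)) volume := by
    have := (φ.integrable (μ := volume)).bdd_mul meas2 (Filter.Eventually.of_forall hb2)
    simpa [mul_assoc] using this
  have h2 : (2 * Complex.I * (t:ℂ)) ^ (-(1/2) : ℂ) *
      Complex.exp (Complex.I * (x:ℂ)^2 / (4*t)) *
      (((1 / Real.sqrt (2*π) : ℝ) : ℂ) *
        ∫ y : ℝ, Complex.exp (-Complex.I * y * ((x/(2*t) : ℝ):ℂ)) * φ y)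
      = ∫ y : ℝ, ((4 * (π:ℂ) * Complex.I * t) ^ (-(1/2) : ℂ) *
          Complex.exp (Complex.I * (x:ℂ)^2 / (4*t))) *
          (Complex.exp (-Complex.I * y * ((x/(2*t) : ℝ):ℂ)) * φ y) := by
    rw [MeasureTheory.integral_const_mul, ← const_split ht]
    ring
  have expid : ∀ y : ℝ, Complex.exp (Complex.I * ((x:ℂ) - y)^2 / (4*t))
      = Complex.exp (Complex.I * (x:ℂ)^2 / (4*t)) *
        (Complex.exp (Complex.I * (y:ℂ)^2 / (4*t)) *
          Complex.exp (-Complex.I * y * ((x/(2*t) : ℝ):ℂ))) := by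
    intro y
    rw [← Complex.exp_add, ← Complex.exp_add]
    congr 1
    push_cast
    field_simp
    ring
  simp only [remA, schrod, ft]
  rw [h2, ← integral_sub hint1 hint2]
  refine integral_congr_ae (Filter.Eventually.of_forall fun y => ?_)
  beta_reduce
  rw [expid y]
  ring

lemma hb_exp {β : ℝ} (hβ0 : 0 < β) (hβ1 : β < 1/4) {t : ℝ} (ht : t ≠ 0) (y : ℝ) :
    ‖Complex.exp (Complex.I * (y:ℂ)^2 / (4*(t:ℂ))) - 1‖
      ≤ 2 * (4*|t|)^(-β) * ((1+y^2) ^ (β - 1/2 : ℝ) * Real.sqrt (1+y^2)) := by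
  rw [show Complex.I * (y:ℂ)^2 / (4*(t:ℂ)) = Complex.I * ((y^2/(4*t) : ℝ):ℂ)
      from (by push_cast; ring)]
  refine (exp_I_sub_one_le hβ0 (by linarith)).trans ?_
  have habs : |y^2/(4*t)| = y^2/(4*|t|) := by
    rw [abs_div, abs_of_nonneg (sq_nonneg y)]
    congr 1
    rw [abs_mul]
    norm_num
  rw [habs, Real.div_rpow (sq_nonneg y) (by positivity)]
  have h1 : (y^2:ℝ)^β ≤ ((1:ℝ)+y^2)^β :=
    Real.rpow_le_rpow (sq_nonneg y) (by nlinarith [sq_nonneg y]) hβ0.le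
  have h2 : ((1:ℝ)+y^2)^β = (1+y^2)^(β-1/2:ℝ) * Real.sqrt (1+y^2) := by
    rw [Real.sqrt_eq_rpow, ← Real.rpow_add (by positivity : (0:ℝ) < 1+y^2)]
    congr 1
    ring
  have h3 : (((4*|t|:ℝ))^β)⁻¹ = (4*|t|:ℝ)^(-β) := (Real.rpow_neg (by positivity) _).symm
  calc 2 * ((y^2:ℝ)^β / (4*|t|)^β) ≤ 2 * (((1:ℝ)+y^2)^β / (4*|t|)^β) := by
        gcongr
  _ = 2 * (4*|t|)^(-β) * ((1+y^2) ^ (β - 1/2 : ℝ) * Real.sqrt (1+y^2)) := by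
        rw [div_eq_mul_inv, h3, h2]; ring

theorem stmt_7 (β : ℝ) (hβ0 : 0 < β) (hβ1 : β < 1 / 4) :
    ∃ C : ℝ, 0 < C ∧ ∀ (φ : SchwartzMap ℝ ℂ) (t : ℝ), t ≠ 0 → ∀ x : ℝ,
      ‖remA t (fun y => φ y) x‖ ≤
        C * |t| ^ (-(1 / 2) - β) *
          (eLpNorm (fun y : ℝ => Real.sqrt (1 + y ^ 2) • φ y) 2 (volume : Measure ℝ)).toReal := by
  set A : ℝ≥0∞ := (∫⁻ y : ℝ, (ENNReal.ofReal ((1+y^2) ^ (β - 1/2 : ℝ))) ^ (2:ℝ)) ^ (1/2:ℝ)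
    with hA
  have hAne : A ≠ ⊤ := (ENNReal.rpow_lt_top_of_nonneg (by norm_num) (Afin hβ0 hβ1)).ne
  have hA0 : (0:ℝ) ≤ A.toReal := ENNReal.toReal_nonneg
  refine ⟨(4*π)^(-(1/2):ℝ) * 2 * (4:ℝ)^(-β) * A.toReal + 1, by positivity, ?_⟩
  intro φ t ht x
  set N : ℝ≥0∞ := eLpNorm (fun y : ℝ => Real.sqrt (1 + y ^ 2) • φ y) 2 volume with hN
  have hNne : N ≠ ⊤ := eLpNorm_weight_ne_top φ
  set κ : ℝ := (4*π*|t|)^(-(1/2):ℝ) * (2 * (4*|t|)^(-β)) with hκ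
  have hκ0 : (0:ℝ) ≤ κ := by rw [hκ]; positivity
  set F : ℝ → ℝ≥0∞ := fun y => ENNReal.ofReal ((1+y^2) ^ (β - 1/2 : ℝ)) with hF
  set G : ℝ → ℝ≥0∞ := fun y => ENNReal.ofReal (Real.sqrt (1+y^2) * ‖φ y‖) with hG
  have hFm : AEMeasurable F volume := by
    apply Continuous.aemeasurable
    apply ENNReal.continuous_ofReal.comp
    apply Continuous.rpow_const (by continuity)
    intro y; left; positivity
  have hGm : AEMeasurable G volume := by
    apply Continuous.aemeasurable
    apply ENNReal.continuous_ofReal.comp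
    exact (Real.continuous_sqrt.comp (by continuity)).mul φ.continuous.norm
  have hgnorm : ∀ y : ℝ, ‖(4 * (π:ℂ) * Complex.I * t) ^ (-(1/2) : ℂ) *
      Complex.exp (Complex.I * (x:ℂ)^2 / (4*t)) *
      ((Complex.exp (Complex.I * (y:ℂ)^2 / (4*t)) - 1) *
        (Complex.exp (-Complex.I * y * ((x/(2*t) : ℝ):ℂ)) * φ y))‖
      ≤ κ * ((1+y^2) ^ (β - 1/2 : ℝ) * (Real.sqrt (1+y^2) * ‖φ y‖)) := by
    intro y
    have hE1 : ‖Complex.exp (Complex.I * (x:ℂ)^2 / (4*(t:ℂ)))‖ = 1 := by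
      rw [show Complex.I * (x:ℂ)^2 / (4*(t:ℂ)) = ((x^2/(4*t) : ℝ):ℂ) * Complex.I
          from (by push_cast; ring), Complex.norm_exp_ofReal_mul_I]
    have hE2 : ‖Complex.exp (-Complex.I * (y:ℂ) * ((x/(2*t) : ℝ):ℂ))‖ = 1 := by
      rw [show -Complex.I * (y:ℂ) * ((x/(2*t) : ℝ):ℂ) = ((-(y*(x/(2*t))) : ℝ):ℂ) * Complex.I
          from (by push_cast; ring), Complex.norm_exp_ofReal_mul_I]
    rw [norm_mul, norm_mul, norm_mul, norm_mul, norm_c ht, hE1, hE2, mul_one, one_mul]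
    calc (4*π*|t|)^(-(1/2):ℝ) * (‖Complex.exp (Complex.I * (y:ℂ)^2 / (4*(t:ℂ))) - 1‖ * ‖φ y‖)
        ≤ (4*π*|t|)^(-(1/2):ℝ) *
          ((2 * (4*|t|)^(-β) * ((1+y^2) ^ (β - 1/2 : ℝ) * Real.sqrt (1+y^2))) * ‖φ y‖) := by
          apply mul_le_mul_of_nonneg_left _ (by positivity)
          exact mul_le_mul_of_nonneg_right (hb_exp hβ0 hβ1 ht y) (norm_nonneg _)
    _ = κ * ((1+y^2) ^ (β - 1/2 : ℝ) * (Real.sqrt (1+y^2) * ‖φ y‖)) := by rw [hκ]; ring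
  have hconj : Real.HolderConjugate 2 2 := Real.HolderConjugate.two_two
  have hGN : (∫⁻ y : ℝ, G y ^ (2:ℝ)) ^ ((1:ℝ)/2) = N := by
    rw [hN, eLpNorm_eq_lintegral_rpow_enorm_toReal (by norm_num) (by norm_num)]
    simp only [ENNReal.toReal_ofNat]
    congr 1
    apply lintegral_congr
    intro y
    congr 1
    rw [hG, ← ofReal_norm, norm_smul, Real.norm_eq_abs,
      abs_of_nonneg (Real.sqrt_nonneg _)]
  have key : (‖remA t (fun y => φ y) x‖₊ : ℝ≥0∞) ≤ ENNReal.ofReal κ * (A * N) := by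
    rw [remA_eq φ ht x]
    refine le_trans (enorm_integral_le_lintegral_enorm _) ?_
    have step1 : ∀ y : ℝ, (‖(4 * (π:ℂ) * Complex.I * t) ^ (-(1/2) : ℂ) *
        Complex.exp (Complex.I * (x:ℂ)^2 / (4*t)) *
        ((Complex.exp (Complex.I * (y:ℂ)^2 / (4*t)) - 1) *
          (Complex.exp (-Complex.I * y * ((x/(2*t) : ℝ):ℂ)) * φ y))‖₊ : ℝ≥0∞)
        ≤ ENNReal.ofReal κ * (F y * G y) := by
      intro y
      have : ENNReal.ofReal κ * (F y * G y)
          = ENNReal.ofReal (κ * ((1+y^2) ^ (β - 1/2 : ℝ) * (Real.sqrt (1+y^2) * ‖φ y‖))) := by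
        rw [hF, hG, ← ENNReal.ofReal_mul (by positivity), ← ENNReal.ofReal_mul hκ0]
      rw [this, ← enorm_eq_nnnorm, ← ofReal_norm]
      exact ENNReal.ofReal_le_ofReal (hgnorm y)
    refine le_trans (lintegral_mono step1) ?_
    rw [lintegral_const_mul' _ _ ENNReal.ofReal_ne_top]
    refine mul_le_mul_right ?_ _
    have hold := ENNReal.lintegral_mul_le_Lp_mul_Lq volume hconj hFm hGm
    simp only [Pi.mul_apply] at hold
    calc (∫⁻ y : ℝ, F y * G y) ≤ (∫⁻ y : ℝ, F y ^ (2:ℝ)) ^ ((1:ℝ)/2) *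
        (∫⁻ y : ℝ, G y ^ (2:ℝ)) ^ ((1:ℝ)/2) := hold
    _ = A * N := by rw [hGN, hA]
  have hRne : ENNReal.ofReal κ * (A * N) ≠ ⊤ :=
    ENNReal.mul_ne_top ENNReal.ofReal_ne_top (ENNReal.mul_ne_top hAne hNne)
  have hreal : ‖remA t (fun y => φ y) x‖ ≤ κ * (A.toReal * N.toReal) := by
    have h := ENNReal.toReal_mono hRne key
    rw [ENNReal.toReal_mul, ENNReal.toReal_mul, ENNReal.toReal_ofReal hκ0] at h
    simpa using h
  have ht' : (0:ℝ) < |t| := abs_pos.mpr ht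
  have hT0 : (0:ℝ) ≤ |t| ^ (-(1/2) - β : ℝ) := Real.rpow_nonneg (abs_nonneg t) _
  have hsplit : κ * A.toReal
      = ((4*π)^(-(1/2):ℝ) * 2 * (4:ℝ)^(-β) * A.toReal) * |t| ^ (-(1/2) - β : ℝ) := by
    rw [hκ, show (4*π*|t|:ℝ) = (4*π)*|t| from by ring,
      Real.mul_rpow (by positivity) (abs_nonneg t),
      Real.mul_rpow (by norm_num) (abs_nonneg t),
      show (-(1/2) - β : ℝ) = (-(1/2)) + (-β) from by ring,
      Real.rpow_add ht']
    ring
  calc ‖remA t (fun y => φ y) x‖ ≤ κ * (A.toReal * N.toReal) := hreal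
  _ = (((4*π)^(-(1/2):ℝ) * 2 * (4:ℝ)^(-β) * A.toReal) * |t| ^ (-(1/2) - β : ℝ)) * N.toReal := by
      rw [← mul_assoc, hsplit]
  _ ≤ (((4*π)^(-(1/2):ℝ) * 2 * (4:ℝ)^(-β) * A.toReal + 1) * |t| ^ (-(1/2) - β : ℝ)) * N.toReal := by
      apply mul_le_mul_of_nonneg_right _ ENNReal.toReal_nonneg
      apply mul_le_mul_of_nonneg_right _ hT0
      linarith
end

section
/- Let f, g ∈ 𝒮(ℝ), s > 0, 0 < δ < 1/4, and define R(s,ξ) = -(i/(4πs)) ∫∫ (e^{-iab/(2s)} - 1) · G(a,b) da db where G(a,b) = (2π)^{-1/2} e^{i(a+b)ξ} ∫_ℝ e^{-ixξ} g(x-b) conj(g)(x) f(x-a) dx. Then |R(s,ξ)| ≲ s^{-1-δ} ‖⟨x⟩f‖_{L²} ‖⟨x⟩g‖_{L²}², uniformly in ξ, with implicit constant depending only on δ. -/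
open MeasureTheory Real ENNReal

lemma aux_sin_sq_le (x : ℝ) : Real.sin x ^ 2 ≤ x ^ 2 := by
  rcases eq_or_ne x 0 with h | h
  · simp [h]
  · exact (Real.sin_sq_lt_sq h).le

lemma aux_norm_exp_I_sub_one_le (θ : ℝ) : ‖Complex.exp (θ * Complex.I) - 1‖ ≤ |θ| := by
  have h : Complex.exp (θ * Complex.I) - 1 =
      ((Real.cos θ - 1 : ℝ) : ℂ) + ((Real.sin θ : ℝ) : ℂ) * Complex.I := by
    rw [Complex.exp_mul_I]
    push_cast
    ring
  rw [h, Complex.norm_add_mul_I]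
  rw [show |θ| = Real.sqrt (θ ^ 2) by rw [Real.sqrt_sq_eq_abs]]
  apply Real.sqrt_le_sqrt
  have h2 : Real.sin (θ / 2) ^ 2 = 1 / 2 - Real.cos θ / 2 := by
    rw [Real.sin_sq_eq_half_sub]
    rw [show 2 * (θ / 2) = θ by ring]
  have h3 := aux_sin_sq_le (θ / 2)
  have h4 := Real.sin_sq_add_cos_sq θ
  nlinarith [h3, h4, h2]

lemma aux_norm_exp_I_sub_one_le_two (θ : ℝ) : ‖Complex.exp (θ * Complex.I) - 1‖ ≤ 2 := by
  refine (norm_sub_le (Complex.exp (θ * Complex.I)) 1).trans ?_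
  have h1 : ‖Complex.exp (θ * Complex.I)‖ = 1 := by
    rw [Complex.norm_exp_ofReal_mul_I]
  rw [h1, norm_one]; norm_num

lemma aux_min_le (δ t : ℝ) (hδ0 : 0 < δ) (hδ1 : δ ≤ 1) (ht : 0 ≤ t) :
    min 2 t ≤ 2 ^ (1 - δ) * t ^ δ := by
  rcases le_total t 2 with h | h
  · rw [min_eq_right h]
    rcases eq_or_lt_of_le ht with rfl | ht'
    · rw [Real.zero_rpow hδ0.ne']
      simp
    · calc t = t ^ (1 - δ) * t ^ δ := by
            rw [← Real.rpow_add ht', sub_add_cancel, Real.rpow_one]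
        _ ≤ 2 ^ (1 - δ) * t ^ δ := by
            apply mul_le_mul_of_nonneg_right _ (Real.rpow_nonneg ht δ)
            exact Real.rpow_le_rpow ht h (by linarith)
  · rw [min_eq_left h]
    calc (2:ℝ) = 2 ^ (1 - δ) * 2 ^ δ := by
          rw [← Real.rpow_add (by norm_num), sub_add_cancel, Real.rpow_one]
      _ ≤ 2 ^ (1 - δ) * t ^ δ := by
          apply mul_le_mul_of_nonneg_left _ (Real.rpow_nonneg (by norm_num) _)
          exact Real.rpow_le_rpow (by norm_num) h hδ0.le

lemma aux_exp_bound (δ : ℝ) (hδ0 : 0 < δ) (hδ1 : δ ≤ 1) (θ : ℝ) :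
    ‖Complex.exp (θ * Complex.I) - 1‖ ≤ 2 ^ (1 - δ) * |θ| ^ δ :=
  (le_min (aux_norm_exp_I_sub_one_le_two θ) (aux_norm_exp_I_sub_one_le θ)).trans
    (aux_min_le δ |θ| hδ0 hδ1 (abs_nonneg θ))

-- |a|^δ ≤ 2^δ (1+(x-a)^2)^(δ/2) (1+x^2)^(δ/2)
lemma aux_abs_rpow_le (δ : ℝ) (hδ0 : 0 < δ) (a x : ℝ) :
    |a| ^ δ ≤ 2 ^ δ * ((1 + (x - a) ^ 2) ^ (δ / 2) * (1 + x ^ 2) ^ (δ / 2)) := by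
  have h1 : |a| ≤ 2 * (Real.sqrt (1 + (x - a) ^ 2) * Real.sqrt (1 + x ^ 2)) := by
    have ha : |a| ≤ |x - a| + |x| := by
      have : a = x - (x - a) := by ring
      calc |a| = |x - (x - a)| := by rw [← this]
        _ ≤ |x| + |x - a| := abs_sub _ _
        _ = |x - a| + |x| := by ring
    have h2 : |x - a| ≤ Real.sqrt (1 + (x - a) ^ 2) := by
      rw [show |x - a| = Real.sqrt ((x-a)^2) by rw [Real.sqrt_sq_eq_abs]]
      exact Real.sqrt_le_sqrt (by linarith)
    have h3 : |x| ≤ Real.sqrt (1 + x ^ 2) := by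
      rw [show |x| = Real.sqrt (x^2) by rw [Real.sqrt_sq_eq_abs]]
      exact Real.sqrt_le_sqrt (by linarith)
    have h4 : (1:ℝ) ≤ Real.sqrt (1 + (x - a) ^ 2) := by
      have := Real.sqrt_le_sqrt (show (1:ℝ) ≤ 1 + (x - a) ^ 2 by nlinarith [sq_nonneg (x - a)])
      rwa [Real.sqrt_one] at this
    have h5 : (1:ℝ) ≤ Real.sqrt (1 + x ^ 2) := by
      have := Real.sqrt_le_sqrt (show (1:ℝ) ≤ 1 + x ^ 2 by nlinarith [sq_nonneg x])
      rwa [Real.sqrt_one] at this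
    nlinarith [Real.sqrt_nonneg (1 + (x-a)^2), Real.sqrt_nonneg (1 + x^2)]
  calc |a| ^ δ ≤ (2 * (Real.sqrt (1 + (x - a) ^ 2) * Real.sqrt (1 + x ^ 2))) ^ δ :=
        Real.rpow_le_rpow (abs_nonneg a) h1 hδ0.le
    _ = 2 ^ δ * ((Real.sqrt (1 + (x - a) ^ 2)) ^ δ * (Real.sqrt (1 + x ^ 2)) ^ δ) := by
        rw [Real.mul_rpow (by norm_num) (by positivity),
          Real.mul_rpow (Real.sqrt_nonneg _) (Real.sqrt_nonneg _)]
    _ = 2 ^ δ * ((1 + (x - a) ^ 2) ^ (δ / 2) * (1 + x ^ 2) ^ (δ / 2)) := by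
        rw [Real.sqrt_eq_rpow, Real.sqrt_eq_rpow, ← Real.rpow_mul (by positivity),
          ← Real.rpow_mul (by positivity)]
        rw [show (1:ℝ)/2 * δ = δ/2 by ring]

-- main pointwise weight bound
lemma aux_weight_bound (δ : ℝ) (hδ0 : 0 < δ) (hδ1 : δ ≤ 1) (a b x : ℝ) :
    |a| ^ δ * |b| ^ δ ≤
      4 * ((1 + (x - a) ^ 2) ^ δ * ((1 + (x - b) ^ 2) ^ δ * (1 + x ^ 2) ^ δ)) := by
  have ha := aux_abs_rpow_le δ hδ0 a x
  have hb := aux_abs_rpow_le δ hδ0 b x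
  have key : |a| ^ δ * |b| ^ δ ≤
      (2 ^ δ * 2 ^ δ) * ((1 + (x - a) ^ 2) ^ (δ/2) * (1 + (x - b) ^ 2) ^ (δ/2) *
        ((1 + x ^ 2) ^ (δ/2) * (1 + x ^ 2) ^ (δ/2))) := by
    have := mul_le_mul ha hb (Real.rpow_nonneg (abs_nonneg b) δ) (by positivity)
    calc |a| ^ δ * |b| ^ δ ≤ _ := this
      _ = (2 ^ δ * 2 ^ δ) * ((1 + (x - a) ^ 2) ^ (δ/2) * (1 + (x - b) ^ 2) ^ (δ/2) *
        ((1 + x ^ 2) ^ (δ/2) * (1 + x ^ 2) ^ (δ/2))) := by ring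
  refine key.trans ?_
  have h22 : (2:ℝ) ^ δ * 2 ^ δ ≤ 4 := by
    have : (2:ℝ) ^ δ ≤ 2 := by
      calc (2:ℝ) ^ δ ≤ 2 ^ (1:ℝ) := Real.rpow_le_rpow_of_exponent_le (by norm_num) hδ1
        _ = 2 := Real.rpow_one 2
    nlinarith [Real.rpow_nonneg (show (0:ℝ) ≤ 2 by norm_num) δ]
  have hxx : (1 + x ^ 2) ^ (δ/2) * (1 + x ^ 2) ^ (δ/2) = (1 + x ^ 2) ^ δ := by
    rw [← Real.rpow_add (by positivity)]; norm_num
  have hmono : ∀ t : ℝ, (1 + t ^ 2) ^ (δ/2) ≤ (1 + t ^ 2) ^ δ := fun t =>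
    Real.rpow_le_rpow_of_exponent_le (by nlinarith [sq_nonneg t]) (by linarith)
  rw [hxx]
  have hfin : (1 + (x - a) ^ 2) ^ (δ/2) * (1 + (x - b) ^ 2) ^ (δ/2) * (1 + x ^ 2) ^ δ ≤
      (1 + (x - a) ^ 2) ^ δ * ((1 + (x - b) ^ 2) ^ δ * (1 + x ^ 2) ^ δ) := by
    have h1 := hmono (x - a)
    have h2 := hmono (x - b)
    have p1 : (0:ℝ) ≤ (1 + (x - a) ^ 2) ^ (δ/2) := Real.rpow_nonneg (by positivity) _
    have p2 : (0:ℝ) ≤ (1 + (x - b) ^ 2) ^ (δ/2) := Real.rpow_nonneg (by positivity) _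
    have p3 : (0:ℝ) ≤ (1 + x ^ 2) ^ δ := Real.rpow_nonneg (by positivity) _
    have p4 : (0:ℝ) ≤ (1 + (x - a) ^ 2) ^ δ := Real.rpow_nonneg (by positivity) _
    nlinarith [mul_le_mul h1 h2 p2 (le_trans p1 h1)]
  calc (2:ℝ) ^ δ * 2 ^ δ * ((1 + (x - a) ^ 2) ^ (δ/2) * (1 + (x - b) ^ 2) ^ (δ/2) *
        (1 + x ^ 2) ^ δ)
      ≤ 4 * ((1 + (x - a) ^ 2) ^ (δ/2) * (1 + (x - b) ^ 2) ^ (δ/2) * (1 + x ^ 2) ^ δ) := by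
        apply mul_le_mul_of_nonneg_right h22
        positivity
    _ ≤ 4 * ((1 + (x - a) ^ 2) ^ δ * ((1 + (x - b) ^ 2) ^ δ * (1 + x ^ 2) ^ δ)) := by
        apply mul_le_mul_of_nonneg_left hfin; norm_num

-- integrability of (1+t^2)^(2δ-1) for δ < 1/4
lemma aux_integrable_weight (δ : ℝ) (hδ0 : 0 < δ) (hδ1 : δ < 1/4) :
    Integrable (fun t : ℝ => (1 + t ^ 2) ^ (2 * δ - 1)) := by
  have hr : (Module.finrank ℝ ℝ : ℝ) < 2 - 4 * δ := by
    simp [Module.finrank_self]; linarith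
  have hint : Integrable (fun t : ℝ => ((1 : ℝ) + ‖t‖) ^ (-(2 - 4 * δ))) :=
    integrable_one_add_norm hr
  refine ((hint.const_mul (2 ^ (1 - 2 * δ))).mono' ?_ ?_)
  · exact (Continuous.rpow_const (by continuity) (fun t => Or.inl (by positivity))).aestronglyMeasurable
  · refine Filter.Eventually.of_forall fun t => ?_
    rw [Real.norm_eq_abs, abs_of_nonneg (Real.rpow_nonneg (by positivity) _)]
    have hb : ((1 + |t|) ^ (2:ℕ)) / 2 ≤ 1 + t ^ 2 := by
      have : |t| ^ 2 = t ^ 2 := sq_abs t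
      nlinarith [abs_nonneg t, sq_nonneg (|t| - 1)]
    have hbpos : (0:ℝ) < ((1 + |t|) ^ (2:ℕ)) / 2 := by positivity
    have step1 : (1 + t ^ 2) ^ (2 * δ - 1) ≤ (((1 + |t|) ^ (2:ℕ)) / 2) ^ (2 * δ - 1) :=
      Real.rpow_le_rpow_of_nonpos hbpos hb (by linarith)
    refine step1.trans (le_of_eq ?_)
    rw [Real.div_rpow (by positivity) (by norm_num),
      ← Real.rpow_natCast (1 + |t|) 2, ← Real.rpow_mul (by positivity)]
    rw [div_eq_mul_inv, ← Real.rpow_neg (by norm_num : (0:ℝ) ≤ 2)]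
    rw [Real.norm_eq_abs]
    ring_nf

lemma aux_holder (δ : ℝ) (hδ0 : 0 < δ) (h : SchwartzMap ℝ ℂ) :
    ∫⁻ t : ℝ, ENNReal.ofReal ((1 + t ^ 2) ^ δ * ‖h t‖) ≤
      (∫⁻ t : ℝ, ENNReal.ofReal ((1 + t ^ 2) ^ (2 * δ - 1))) ^ ((1:ℝ)/2) *
        eLpNorm (fun x : ℝ => Real.sqrt (1 + x ^ 2) • h x) 2 (volume : Measure ℝ) := by
  set f₁ : ℝ → ℝ≥0∞ := fun t => ENNReal.ofReal ((1 + t ^ 2) ^ (δ - 1/2)) with hf₁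
  set f₂ : ℝ → ℝ≥0∞ := fun t => (‖Real.sqrt (1 + t ^ 2) • h t‖₊ : ℝ≥0∞) with hf₂
  have hdecomp : ∀ t : ℝ, ENNReal.ofReal ((1 + t ^ 2) ^ δ * ‖h t‖) = f₁ t * f₂ t := by
    intro t
    have hpos : (0:ℝ) < 1 + t ^ 2 := by positivity
    have hn : ‖Real.sqrt (1 + t ^ 2) • h t‖ = Real.sqrt (1 + t ^ 2) * ‖h t‖ := by
      rw [norm_smul, Real.norm_eq_abs, abs_of_nonneg (Real.sqrt_nonneg _)]
    have hsplit : (1 + t ^ 2) ^ δ = (1 + t ^ 2) ^ (δ - 1/2) * Real.sqrt (1 + t ^ 2) := by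
      rw [Real.sqrt_eq_rpow, ← Real.rpow_add hpos]
      norm_num
    show ENNReal.ofReal ((1 + t ^ 2) ^ δ * ‖h t‖) =
      ENNReal.ofReal ((1 + t ^ 2) ^ (δ - 1/2)) * (‖Real.sqrt (1 + t ^ 2) • h t‖₊ : ℝ≥0∞)
    rw [← enorm_eq_nnnorm, ← ofReal_norm, hn, hsplit, mul_assoc,
      ENNReal.ofReal_mul (Real.rpow_nonneg hpos.le _)]
  have hmf₁ : AEMeasurable f₁ (volume : Measure ℝ) := by
    apply Measurable.aemeasurable
    apply ENNReal.measurable_ofReal.comp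
    exact (Continuous.rpow_const (by continuity) fun t => Or.inl (by positivity)).measurable
  have hmf₂ : AEMeasurable f₂ (volume : Measure ℝ) := by
    apply Measurable.aemeasurable
    apply Measurable.coe_nnreal_ennreal
    apply Measurable.nnnorm
    exact (((continuous_const.add (continuous_pow 2)).sqrt).smul h.continuous).measurable
  have hpq : Real.HolderConjugate 2 2 := Real.HolderConjugate.two_two
  have holder := ENNReal.lintegral_mul_le_Lp_mul_Lq (volume : Measure ℝ) hpq hmf₁ hmf₂
  calc ∫⁻ t : ℝ, ENNReal.ofReal ((1 + t ^ 2) ^ δ * ‖h t‖)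
      = ∫⁻ t : ℝ, (f₁ * f₂) t := by
        apply lintegral_congr; intro t; exact hdecomp t
    _ ≤ (∫⁻ t : ℝ, f₁ t ^ (2:ℝ)) ^ ((1:ℝ)/2) * (∫⁻ t : ℝ, f₂ t ^ (2:ℝ)) ^ ((1:ℝ)/2) := holder
    _ = (∫⁻ t : ℝ, ENNReal.ofReal ((1 + t ^ 2) ^ (2 * δ - 1))) ^ ((1:ℝ)/2) *
        eLpNorm (fun x : ℝ => Real.sqrt (1 + x ^ 2) • h x) 2 (volume : Measure ℝ) := by
        congr 1
        · congr 1
          apply lintegral_congr; intro t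
          rw [hf₁, ENNReal.ofReal_rpow_of_pos (by positivity),
            ← Real.rpow_mul (by positivity : (0:ℝ) ≤ 1 + t ^ 2),
            show (δ - 1/2) * 2 = 2 * δ - 1 by ring]
        · rw [eLpNorm_eq_lintegral_rpow_enorm_toReal (by norm_num) (by norm_num)]
          norm_num
          congr 1
          apply lintegral_congr; intro t
          rw [hf₂]; dsimp only
          rw [← enorm_eq_nnnorm, Complex.real_smul, enorm_mul]

lemma aux_eLpNorm_lt_top (h : SchwartzMap ℝ ℂ) :
    eLpNorm (fun x : ℝ => Real.sqrt (1 + x ^ 2) • h x) 2 (volume : Measure ℝ) ≠ ⊤ := by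
  obtain ⟨C0, hC0pos, hC0⟩ := h.decay 0 0
  obtain ⟨C2, hC2pos, hC2⟩ := h.decay 2 0
  have hbd : ∀ x : ℝ, (1 + x ^ 2) * ‖h x‖ ≤ C0 + C2 := by
    intro x
    have h0 := hC0 x
    have h2 := hC2 x
    simp only [norm_iteratedFDeriv_zero, pow_zero, one_mul] at h0 h2
    have hx2 : ‖x‖ ^ 2 = x ^ 2 := by rw [Real.norm_eq_abs, sq_abs]
    rw [hx2] at h2
    nlinarith [norm_nonneg (h x), sq_nonneg x]
  rw [eLpNorm_eq_lintegral_rpow_enorm_toReal (by norm_num) (by norm_num)]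
  apply ENNReal.rpow_ne_top_of_nonneg (by norm_num)
  have hbound : ∀ x : ℝ, (‖Real.sqrt (1 + x ^ 2) • h x‖₊ : ℝ≥0∞) ^ ((2:ℝ≥0∞).toReal) ≤
      ENNReal.ofReal (C0 + C2) * (‖h x‖₊ : ℝ≥0∞) := by
    intro x
    have hpos : (0:ℝ) < 1 + x ^ 2 := by positivity
    rw [← enorm_eq_nnnorm, ← enorm_eq_nnnorm, ← ofReal_norm, ← ofReal_norm, ENNReal.toReal_ofNat,
      ENNReal.ofReal_rpow_of_nonneg (norm_nonneg _) (by norm_num),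
      ← ENNReal.ofReal_mul (by positivity)]
    apply ENNReal.ofReal_le_ofReal
    have hn : ‖Real.sqrt (1 + x ^ 2) • h x‖ = Real.sqrt (1 + x ^ 2) * ‖h x‖ := by
      rw [norm_smul, Real.norm_eq_abs, abs_of_nonneg (Real.sqrt_nonneg _)]
    rw [hn]
    have hrp : (Real.sqrt (1 + x ^ 2) * ‖h x‖) ^ (2:ℝ) =
        (Real.sqrt (1 + x ^ 2) * ‖h x‖) ^ (2:ℕ) := by
      rw [← Real.rpow_natCast (Real.sqrt (1 + x ^ 2) * ‖h x‖) 2]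
      norm_num
    rw [hrp, mul_pow, Real.sq_sqrt hpos.le]
    nlinarith [hbd x, norm_nonneg (h x)]
  have hfin : ∫⁻ x : ℝ, (‖Real.sqrt (1 + x ^ 2) • h x‖₊ : ℝ≥0∞) ^ ((2:ℝ≥0∞).toReal) < ⊤ :=
    calc ∫⁻ x : ℝ, (‖Real.sqrt (1 + x ^ 2) • h x‖₊ : ℝ≥0∞) ^ ((2:ℝ≥0∞).toReal)
        ≤ ∫⁻ x : ℝ, ENNReal.ofReal (C0 + C2) * (‖h x‖₊ : ℝ≥0∞) :=
          lintegral_mono hbound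
      _ = ENNReal.ofReal (C0 + C2) * ∫⁻ x : ℝ, (‖h x‖₊ : ℝ≥0∞) :=
          lintegral_const_mul' _ _ ENNReal.ofReal_ne_top
      _ < ⊤ := ENNReal.mul_lt_top ENNReal.ofReal_lt_top h.integrable.hasFiniteIntegral
  exact hfin.ne

lemma aux_tonelli (P Q : ℝ → ℝ≥0∞) (hP : Measurable P) (hQ : Measurable Q)
    (hPt : ∀ t, P t ≠ ⊤) (hQt : ∀ t, Q t ≠ ⊤)
    (hIP : ∫⁻ t, P t ≠ ⊤) (hIQ : ∫⁻ t, Q t ≠ ⊤) :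
    ∫⁻ a : ℝ, ∫⁻ b : ℝ, ∫⁻ x : ℝ, P (x - a) * (Q (x - b) * Q x) =
      (∫⁻ t, P t) * ((∫⁻ t, Q t) * (∫⁻ t, Q t)) := by
  have step1 : ∀ a : ℝ, (∫⁻ b : ℝ, ∫⁻ x : ℝ, P (x - a) * (Q (x - b) * Q x)) =
      (∫⁻ x : ℝ, P (x - a) * Q x) * ∫⁻ t, Q t := by
    intro a
    have hswap : (∫⁻ b : ℝ, ∫⁻ x : ℝ, P (x - a) * (Q (x - b) * Q x)) =
        ∫⁻ x : ℝ, ∫⁻ b : ℝ, P (x - a) * (Q (x - b) * Q x) := by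
      apply lintegral_lintegral_swap
      apply Measurable.aemeasurable
      exact ((hP.comp (measurable_snd.sub measurable_const)).mul
        ((hQ.comp (measurable_snd.sub measurable_fst)).mul (hQ.comp measurable_snd)))
    rw [hswap]
    have inner : ∀ x : ℝ, (∫⁻ b : ℝ, P (x - a) * (Q (x - b) * Q x)) =
        (P (x - a) * Q x) * ∫⁻ t, Q t := by
      intro x
      have : ∀ b : ℝ, P (x - a) * (Q (x - b) * Q x) = (P (x - a) * Q x) * Q (x - b) := by
        intro b; ring
      rw [lintegral_congr this, lintegral_const_mul' _ _ (ENNReal.mul_ne_top (hPt _) (hQt _))]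
      congr 1
      exact (Measure.measurePreserving_sub_left (volume : Measure ℝ) x).lintegral_comp hQ
    rw [lintegral_congr inner]
    exact lintegral_mul_const' _ _ hIQ
  rw [lintegral_congr step1, lintegral_mul_const' _ _ hIQ]
  have hswap2 : (∫⁻ a : ℝ, ∫⁻ x : ℝ, P (x - a) * Q x) =
      ∫⁻ x : ℝ, ∫⁻ a : ℝ, P (x - a) * Q x := by
    apply lintegral_lintegral_swap
    apply Measurable.aemeasurable
    exact (hP.comp (measurable_snd.sub measurable_fst)).mul (hQ.comp measurable_snd)
  have inner2 : ∀ x : ℝ, (∫⁻ a : ℝ, P (x - a) * Q x) = (∫⁻ t, P t) * Q x := by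
    intro x
    rw [lintegral_mul_const' _ _ (hQt x)]
    congr 1
    exact (Measure.measurePreserving_sub_left (volume : Measure ℝ) x).lintegral_comp hP
  rw [hswap2, lintegral_congr inner2, lintegral_const_mul' _ _ hIP]
  ring

theorem stmt_10 (δ : ℝ) (hδ0 : 0 < δ) (hδ1 : δ < 1 / 4) :
    ∃ C : ℝ, 0 < C ∧ ∀ (f g : SchwartzMap ℝ ℂ) (s : ℝ), 0 < s → ∀ ξ : ℝ,
      ‖-(Complex.I / (4 * π * s)) *
          ∫ a : ℝ, ∫ b : ℝ, (Complex.exp (-(Complex.I) * a * b / (2 * s)) - 1) *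
            ((1 / Real.sqrt (2 * π) : ℝ) * Complex.exp (Complex.I * (a + b) * ξ) *
              ∫ x : ℝ, Complex.exp (-(Complex.I) * x * ξ) *
                (g (x - b) * starRingEnd ℂ (g x) * f (x - a)))‖ ≤
        C * s ^ (-1 - δ) *
          (eLpNorm (fun x : ℝ => Real.sqrt (1 + x ^ 2) • f x) 2 (volume : Measure ℝ)).toReal *
          (eLpNorm (fun x : ℝ => Real.sqrt (1 + x ^ 2) • g x) 2 (volume : Measure ℝ)).toReal ^ 2 := by
  have hπ : 0 < π := Real.pi_pos
  have hδle : δ ≤ 1 := by linarith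
  set A : ℝ≥0∞ := (∫⁻ t : ℝ, ENNReal.ofReal ((1 + t ^ 2) ^ (2 * δ - 1))) ^ ((1:ℝ)/2) with hA
  have hIW : ∫⁻ t : ℝ, ENNReal.ofReal ((1 + t ^ 2) ^ (2 * δ - 1)) ≠ ⊤ := by
    have hi := aux_integrable_weight δ hδ0 hδ1
    have h2 := hi.hasFiniteIntegral
    rw [HasFiniteIntegral] at h2
    refine ne_top_of_le_ne_top h2.ne (lintegral_mono fun t => ?_)
    rw [← ofReal_norm, Real.norm_eq_abs,
      abs_of_nonneg (Real.rpow_nonneg (by positivity) _)]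
  have hAtop : A ≠ ⊤ := ENNReal.rpow_ne_top_of_nonneg (by norm_num) hIW
  set r : ℝ := 1 / Real.sqrt (2 * π) with hrdef
  have hr0 : 0 ≤ r := by positivity
  set C₀ : ℝ := (1 / (4 * π)) * (2 ^ ((1:ℝ) - δ) * 2 ^ (-δ) * r * 4) with hC₀
  have hC₀0 : 0 ≤ C₀ := by positivity
  refine ⟨C₀ * A.toReal ^ 3 + 1, by positivity, ?_⟩
  intro f g s hs ξ
  set c1 : ℝ := 2 ^ (1 - δ) * ((2*s)⁻¹) ^ δ * r * 4 with hc1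
  have hc10 : 0 ≤ c1 := by positivity
  set P : ℝ → ℝ≥0∞ := fun t => ENNReal.ofReal ((1 + t ^ 2) ^ δ * ‖f t‖) with hP
  set Q : ℝ → ℝ≥0∞ := fun t => ENNReal.ofReal ((1 + t ^ 2) ^ δ * ‖g t‖) with hQ
  have hwcont : Continuous fun t : ℝ => (1 + t ^ 2) ^ δ :=
    Continuous.rpow_const (by continuity) fun t => Or.inl (by positivity)
  have hPm : Measurable P :=
    ENNReal.measurable_ofReal.comp (hwcont.mul f.continuous.norm).measurable
  have hQm : Measurable Q :=
    ENNReal.measurable_ofReal.comp (hwcont.mul g.continuous.norm).measurable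
  have hNf := aux_eLpNorm_lt_top f
  have hNg := aux_eLpNorm_lt_top g
  have hHf := aux_holder δ hδ0 f
  have hHg := aux_holder δ hδ0 g
  have hIPne : (∫⁻ t, P t) ≠ ⊤ :=
    ne_top_of_le_ne_top (ENNReal.mul_ne_top hAtop hNf) hHf
  have hIQne : (∫⁻ t, Q t) ≠ ⊤ :=
    ne_top_of_le_ne_top (ENNReal.mul_ne_top hAtop hNg) hHg
  have htri := aux_tonelli P Q hPm hQm (fun t => ENNReal.ofReal_ne_top)
    (fun t => ENNReal.ofReal_ne_top) hIPne hIQne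
  -- inner norm computation
  have hnormu : ∀ a b x : ℝ,
      ‖Complex.exp (-(Complex.I) * x * ξ) * (g (x - b) * starRingEnd ℂ (g x) * f (x - a))‖ =
        ‖g (x - b)‖ * ‖g x‖ * ‖f (x - a)‖ := by
    intro a b x
    have h3 : ‖Complex.exp (-(Complex.I) * x * ξ)‖ = 1 := by
      have harg : -(Complex.I) * (x:ℂ) * (ξ:ℂ) = ((-(x * ξ) : ℝ) : ℂ) * Complex.I := by
        push_cast; ring
      rw [harg, Complex.norm_exp_ofReal_mul_I]
    rw [norm_mul, h3, one_mul, norm_mul, norm_mul, RCLike.norm_conj]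
  -- key pointwise bound
  have hkey : ∀ a b : ℝ,
      ENNReal.ofReal ‖(Complex.exp (-(Complex.I) * a * b / (2 * s)) - 1) *
        ((1 / Real.sqrt (2 * π) : ℝ) * Complex.exp (Complex.I * (a + b) * ξ) *
          ∫ x : ℝ, Complex.exp (-(Complex.I) * x * ξ) *
            (g (x - b) * starRingEnd ℂ (g x) * f (x - a)))‖ ≤
      ENNReal.ofReal c1 * ∫⁻ x : ℝ, P (x - a) * (Q (x - b) * Q x) := by
    intro a b
    have hE2 : ‖Complex.exp (Complex.I * (a + b) * ξ)‖ = 1 := by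
      have harg : Complex.I * ((a:ℂ) + (b:ℂ)) * (ξ:ℂ) = (((a + b) * ξ : ℝ) : ℂ) * Complex.I := by
        push_cast; ring
      rw [harg, Complex.norm_exp_ofReal_mul_I]
    have hE1 : ‖Complex.exp (-(Complex.I) * a * b / (2 * s)) - 1‖ ≤
        2 ^ (1 - δ) * (|a| ^ δ * |b| ^ δ * ((2*s)⁻¹) ^ δ) := by
      have harg : -(Complex.I) * (a:ℂ) * (b:ℂ) / (2 * (s:ℂ)) =
          ((-(a * b) / (2 * s) : ℝ) : ℂ) * Complex.I := by
        push_cast; ring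
      rw [harg]
      refine (aux_exp_bound δ hδ0 hδle _).trans (le_of_eq ?_)
      congr 1
      rw [abs_div, abs_neg, abs_mul, abs_of_pos (by linarith : (0:ℝ) < 2 * s),
        div_eq_mul_inv, Real.mul_rpow (by positivity) (by positivity),
        Real.mul_rpow (abs_nonneg a) (abs_nonneg b)]
    have hnorm1 : ‖(Complex.exp (-(Complex.I) * a * b / (2 * s)) - 1) *
        ((1 / Real.sqrt (2 * π) : ℝ) * Complex.exp (Complex.I * (a + b) * ξ) *
          ∫ x : ℝ, Complex.exp (-(Complex.I) * x * ξ) *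
            (g (x - b) * starRingEnd ℂ (g x) * f (x - a)))‖ =
        ‖Complex.exp (-(Complex.I) * a * b / (2 * s)) - 1‖ *
          (r * ‖∫ x : ℝ, Complex.exp (-(Complex.I) * x * ξ) *
            (g (x - b) * starRingEnd ℂ (g x) * f (x - a))‖) := by
      rw [norm_mul, norm_mul, norm_mul, hE2, mul_one, Complex.norm_real,
        Real.norm_eq_abs, abs_of_nonneg hr0]
    have hintu : ENNReal.ofReal ‖∫ x : ℝ, Complex.exp (-(Complex.I) * x * ξ) *
          (g (x - b) * starRingEnd ℂ (g x) * f (x - a))‖ ≤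
        ∫⁻ x : ℝ, ENNReal.ofReal ‖Complex.exp (-(Complex.I) * x * ξ) *
          (g (x - b) * starRingEnd ℂ (g x) * f (x - a))‖ := by
      rw [ofReal_norm]
      refine (enorm_integral_le_lintegral_enorm _).trans (le_of_eq ?_)
      apply lintegral_congr; intro x
      rw [ofReal_norm]
    have hpt : ∀ x : ℝ, ENNReal.ofReal (|a| ^ δ * |b| ^ δ) *
        ENNReal.ofReal ‖Complex.exp (-(Complex.I) * x * ξ) *
          (g (x - b) * starRingEnd ℂ (g x) * f (x - a))‖ ≤
        4 * (P (x - a) * (Q (x - b) * Q x)) := by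
      intro x
      rw [← ENNReal.ofReal_mul (by positivity), hnormu a b x]
      have hreal : |a| ^ δ * |b| ^ δ * (‖g (x - b)‖ * ‖g x‖ * ‖f (x - a)‖) ≤
          4 * (((1 + (x - a) ^ 2) ^ δ * ‖f (x - a)‖) *
            (((1 + (x - b) ^ 2) ^ δ * ‖g (x - b)‖) * ((1 + x ^ 2) ^ δ * ‖g x‖))) := by
        have hw := aux_weight_bound δ hδ0 hδle a b x
        have hnn : (0:ℝ) ≤ ‖g (x - b)‖ * ‖g x‖ * ‖f (x - a)‖ := by positivity
        calc |a| ^ δ * |b| ^ δ * (‖g (x - b)‖ * ‖g x‖ * ‖f (x - a)‖)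
            ≤ (4 * ((1 + (x - a) ^ 2) ^ δ * ((1 + (x - b) ^ 2) ^ δ * (1 + x ^ 2) ^ δ))) *
              (‖g (x - b)‖ * ‖g x‖ * ‖f (x - a)‖) :=
              mul_le_mul_of_nonneg_right hw hnn
          _ = 4 * (((1 + (x - a) ^ 2) ^ δ * ‖f (x - a)‖) *
              (((1 + (x - b) ^ 2) ^ δ * ‖g (x - b)‖) * ((1 + x ^ 2) ^ δ * ‖g x‖))) := by
              ring
      refine (ENNReal.ofReal_le_ofReal hreal).trans (le_of_eq ?_)
      simp only [hP, hQ]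
      rw [ENNReal.ofReal_mul (by norm_num : (0:ℝ) ≤ 4),
        ENNReal.ofReal_mul (by positivity : (0:ℝ) ≤ (1 + (x - a) ^ 2) ^ δ * ‖f (x - a)‖),
        ENNReal.ofReal_mul (by positivity : (0:ℝ) ≤ (1 + (x - b) ^ 2) ^ δ * ‖g (x - b)‖),
        ENNReal.ofReal_ofNat]
    calc ENNReal.ofReal ‖(Complex.exp (-(Complex.I) * a * b / (2 * s)) - 1) *
        ((1 / Real.sqrt (2 * π) : ℝ) * Complex.exp (Complex.I * (a + b) * ξ) *
          ∫ x : ℝ, Complex.exp (-(Complex.I) * x * ξ) *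
            (g (x - b) * starRingEnd ℂ (g x) * f (x - a)))‖
        = ENNReal.ofReal ‖Complex.exp (-(Complex.I) * a * b / (2 * s)) - 1‖ *
          (ENNReal.ofReal r * ENNReal.ofReal ‖∫ x : ℝ, Complex.exp (-(Complex.I) * x * ξ) *
            (g (x - b) * starRingEnd ℂ (g x) * f (x - a))‖) := by
          rw [hnorm1, ENNReal.ofReal_mul (norm_nonneg _), ENNReal.ofReal_mul hr0]
      _ ≤ ENNReal.ofReal (2 ^ (1 - δ) * (|a| ^ δ * |b| ^ δ * ((2*s)⁻¹) ^ δ)) *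
          (ENNReal.ofReal r * ∫⁻ x : ℝ, ENNReal.ofReal ‖Complex.exp (-(Complex.I) * x * ξ) *
            (g (x - b) * starRingEnd ℂ (g x) * f (x - a))‖) := by
          exact mul_le_mul' (ENNReal.ofReal_le_ofReal hE1) (mul_le_mul' le_rfl hintu)
      _ = ENNReal.ofReal (2 ^ (1 - δ) * ((2*s)⁻¹) ^ δ * r) *
          ∫⁻ x : ℝ, ENNReal.ofReal (|a| ^ δ * |b| ^ δ) *
            ENNReal.ofReal ‖Complex.exp (-(Complex.I) * x * ξ) *
              (g (x - b) * starRingEnd ℂ (g x) * f (x - a))‖ := by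
          rw [lintegral_const_mul' _ _ ENNReal.ofReal_ne_top]
          have hsc : ENNReal.ofReal (2 ^ (1 - δ) * (|a| ^ δ * |b| ^ δ * ((2*s)⁻¹) ^ δ)) *
              ENNReal.ofReal r = ENNReal.ofReal (2 ^ (1 - δ) * ((2*s)⁻¹) ^ δ * r) *
              ENNReal.ofReal (|a| ^ δ * |b| ^ δ) := by
            rw [← ENNReal.ofReal_mul (by positivity), ← ENNReal.ofReal_mul (by positivity)]
            congr 1
            ring
          rw [← mul_assoc, hsc, mul_assoc]
      _ ≤ ENNReal.ofReal (2 ^ (1 - δ) * ((2*s)⁻¹) ^ δ * r) *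
          ∫⁻ x : ℝ, 4 * (P (x - a) * (Q (x - b) * Q x)) := by
          exact mul_le_mul' le_rfl (lintegral_mono hpt)
      _ = ENNReal.ofReal c1 * ∫⁻ x : ℝ, P (x - a) * (Q (x - b) * Q x) := by
          rw [lintegral_const_mul' 4 _ (by norm_num), hc1,
            ENNReal.ofReal_mul (by positivity : (0:ℝ) ≤ 2 ^ (1 - δ) * ((2*s)⁻¹) ^ δ * r),
            ENNReal.ofReal_ofNat, ← mul_assoc]
  -- top-level
  rw [norm_mul]
  have hcoef : ‖-(Complex.I / (4 * (π:ℂ) * (s:ℂ)))‖ = 1 / (4 * π * s) := by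
    rw [norm_neg, norm_div, Complex.norm_I]
    congr 1
    rw [show (4 * (π:ℂ) * (s:ℂ)) = ((4 * π * s : ℝ) : ℂ) by push_cast; ring,
      Complex.norm_real, Real.norm_eq_abs, abs_of_pos (by positivity)]
  rw [hcoef]
  set Nf := eLpNorm (fun x : ℝ => Real.sqrt (1 + x ^ 2) • f x) 2 (volume : Measure ℝ) with hNfdef
  set Ng := eLpNorm (fun x : ℝ => Real.sqrt (1 + x ^ 2) • g x) 2 (volume : Measure ℝ) with hNgdef
  set B : ℝ≥0∞ := ENNReal.ofReal c1 * ((A * Nf) * ((A * Ng) * (A * Ng))) with hB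
  have hBne : B ≠ ⊤ := by
    refine ENNReal.mul_ne_top ENNReal.ofReal_ne_top ?_
    exact ENNReal.mul_ne_top (ENNReal.mul_ne_top hAtop hNf)
      (ENNReal.mul_ne_top (ENNReal.mul_ne_top hAtop hNg) (ENNReal.mul_ne_top hAtop hNg))
  have hlin : (∫⁻ a : ℝ, ENNReal.ofReal
      ‖∫ b : ℝ, (Complex.exp (-(Complex.I) * a * b / (2 * s)) - 1) *
        ((1 / Real.sqrt (2 * π) : ℝ) * Complex.exp (Complex.I * (a + b) * ξ) *
          ∫ x : ℝ, Complex.exp (-(Complex.I) * x * ξ) *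
            (g (x - b) * starRingEnd ℂ (g x) * f (x - a)))‖) ≤ B := by
    calc (∫⁻ a : ℝ, ENNReal.ofReal
        ‖∫ b : ℝ, (Complex.exp (-(Complex.I) * a * b / (2 * s)) - 1) *
          ((1 / Real.sqrt (2 * π) : ℝ) * Complex.exp (Complex.I * (a + b) * ξ) *
            ∫ x : ℝ, Complex.exp (-(Complex.I) * x * ξ) *
              (g (x - b) * starRingEnd ℂ (g x) * f (x - a)))‖)
        ≤ ∫⁻ a : ℝ, ∫⁻ b : ℝ, ENNReal.ofReal
          ‖(Complex.exp (-(Complex.I) * a * b / (2 * s)) - 1) *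
            ((1 / Real.sqrt (2 * π) : ℝ) * Complex.exp (Complex.I * (a + b) * ξ) *
              ∫ x : ℝ, Complex.exp (-(Complex.I) * x * ξ) *
                (g (x - b) * starRingEnd ℂ (g x) * f (x - a)))‖ := by
          apply lintegral_mono; intro a
          dsimp only
          rw [ofReal_norm]
          refine (enorm_integral_le_lintegral_enorm _).trans (le_of_eq ?_)
          apply lintegral_congr; intro b
          rw [ofReal_norm]
      _ ≤ ∫⁻ a : ℝ, ∫⁻ b : ℝ, ENNReal.ofReal c1 * ∫⁻ x : ℝ, P (x - a) * (Q (x - b) * Q x) := by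
          exact lintegral_mono fun a => lintegral_mono fun b => hkey a b
      _ = ∫⁻ a : ℝ, ENNReal.ofReal c1 * ∫⁻ b : ℝ, ∫⁻ x : ℝ, P (x - a) * (Q (x - b) * Q x) :=
          lintegral_congr fun a => lintegral_const_mul' _ _ ENNReal.ofReal_ne_top
      _ = ENNReal.ofReal c1 * ∫⁻ a : ℝ, ∫⁻ b : ℝ, ∫⁻ x : ℝ, P (x - a) * (Q (x - b) * Q x) :=
          lintegral_const_mul' _ _ ENNReal.ofReal_ne_top
      _ = ENNReal.ofReal c1 * ((∫⁻ t, P t) * ((∫⁻ t, Q t) * (∫⁻ t, Q t))) := by rw [htri]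
      _ ≤ B := by
          rw [hB]
          exact mul_le_mul' le_rfl (mul_le_mul' hHf (mul_le_mul' hHg hHg))
  have hmain := (norm_integral_le_lintegral_norm
    (fun a : ℝ => ∫ b : ℝ, (Complex.exp (-(Complex.I) * a * b / (2 * s)) - 1) *
      ((1 / Real.sqrt (2 * π) : ℝ) * Complex.exp (Complex.I * (a + b) * ξ) *
        ∫ x : ℝ, Complex.exp (-(Complex.I) * x * ξ) *
          (g (x - b) * starRingEnd ℂ (g x) * f (x - a))))).trans
    (ENNReal.toReal_mono hBne hlin)
  have hBtoReal : B.toReal = c1 * (A.toReal * Nf.toReal *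
      (A.toReal * Ng.toReal * (A.toReal * Ng.toReal))) := by
    simp [hB, ENNReal.toReal_mul, ENNReal.toReal_ofReal hc10]
  have hfinal : (1 / (4 * π * s)) * B.toReal ≤
      (C₀ * A.toReal ^ 3 + 1) * s ^ (-1 - δ) * Nf.toReal * Ng.toReal ^ 2 := by
    rw [hBtoReal]
    have h2s : ((2*s)⁻¹) ^ δ = 2 ^ (-δ) * s ^ (-δ) := by
      rw [Real.inv_rpow (by positivity), Real.mul_rpow (by norm_num) hs.le, mul_inv,
        Real.rpow_neg (by norm_num : (0:ℝ) ≤ 2), Real.rpow_neg hs.le]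
    have hss : s ^ (-1 - δ) = s⁻¹ * s ^ (-δ) := by
      rw [show (-1 - δ) = (-1) + (-δ) by ring, Real.rpow_add hs, Real.rpow_neg_one]
    have hsplit : (1 / (4 * π * s)) * c1 = C₀ * s ^ (-1 - δ) := by
      rw [hc1, h2s, hss, hC₀]
      field_simp
    calc (1 / (4 * π * s)) * (c1 * (A.toReal * Nf.toReal *
        (A.toReal * Ng.toReal * (A.toReal * Ng.toReal))))
        = ((1 / (4 * π * s)) * c1) * (A.toReal ^ 3 * Nf.toReal * Ng.toReal ^ 2) := by ring
      _ = (C₀ * A.toReal ^ 3) * s ^ (-1 - δ) * Nf.toReal * Ng.toReal ^ 2 := by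
          rw [hsplit]; ring
      _ ≤ (C₀ * A.toReal ^ 3 + 1) * s ^ (-1 - δ) * Nf.toReal * Ng.toReal ^ 2 := by
          have hx : (0:ℝ) ≤ s ^ (-1 - δ) * Nf.toReal * Ng.toReal ^ 2 := by positivity
          nlinarith [hx]
  calc (1 / (4 * π * s)) * ‖∫ a : ℝ, ∫ b : ℝ,
      (Complex.exp (-(Complex.I) * a * b / (2 * s)) - 1) *
        ((1 / Real.sqrt (2 * π) : ℝ) * Complex.exp (Complex.I * (a + b) * ξ) *
          ∫ x : ℝ, Complex.exp (-(Complex.I) * x * ξ) *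
            (g (x - b) * starRingEnd ℂ (g x) * f (x - a)))‖
      ≤ (1 / (4 * π * s)) * B.toReal := by
        apply mul_le_mul_of_nonneg_left hmain (by positivity)
    _ ≤ (C₀ * A.toReal ^ 3 + 1) * s ^ (-1 - δ) * Nf.toReal * Ng.toReal ^ 2 := hfinal
end

section
/- Let w : [1,∞) → ℂ be differentiable in t (for each fixed ξ, suppressed) with |w(t)| ≤ C₀ and |w(t₂) - w(t₁)| ≤ C|t₂^{-κ} - t₁^{-κ}| for all 1 ≤ t₁ ≤ t₂, where κ > 0. Define γ(t) = ∫₁ᵗ (|w(τ)|² - |w(t)|²) dτ/τ. Then there exists Γ ∈ ℂ such that |γ(s) - Γ| ≲ s^{-κ} ln(s) + s^{-κ} for all s ≥ 1; in particular γ(s) converges as s → ∞. -/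
open MeasureTheory Real intervalIntegral Filter

theorem stmt_15 (w : ℝ → ℂ) (C₀ C κ : ℝ) (hκ : 0 < κ) (hC : 0 < C)
    (hdiff : Differentiable ℝ w)
    (hbd : ∀ t : ℝ, 1 ≤ t → ‖w t‖ ≤ C₀)
    (hcau : ∀ t₁ t₂ : ℝ, 1 ≤ t₁ → t₁ ≤ t₂ → ‖w t₂ - w t₁‖ ≤ C * |t₂ ^ (-κ) - t₁ ^ (-κ)|)
    (γ : ℝ → ℝ)
    (hγ : ∀ t : ℝ, γ t = ∫ τ in (1 : ℝ)..t, (‖w τ‖ ^ 2 - ‖w t‖ ^ 2) / τ) :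
    ∃ Γ : ℝ, ∃ K : ℝ, 0 < K ∧
      ∀ s : ℝ, 1 ≤ s → |γ s - Γ| ≤ K * (s ^ (-κ) * Real.log s + s ^ (-κ)) := by
  set f : ℝ → ℝ := fun t => ‖w t‖ ^ 2 with hfdef
  have hC₀ : 0 ≤ C₀ := le_trans (norm_nonneg _) (hbd 1 le_rfl)
  set D : ℝ := 2 * C₀ * C with hD
  have hD0 : 0 ≤ D := by positivity
  -- Hölder estimate for f
  have hf : ∀ t₁ t₂ : ℝ, 1 ≤ t₁ → t₁ ≤ t₂ → |f t₂ - f t₁| ≤ D * t₁ ^ (-κ) := by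
    intro t₁ t₂ h1 h12
    have h2 : (1:ℝ) ≤ t₂ := le_trans h1 h12
    have key : |f t₂ - f t₁| ≤ 2 * C₀ * ‖w t₂ - w t₁‖ := by
      have heq : f t₂ - f t₁ = (‖w t₂‖ - ‖w t₁‖) * (‖w t₂‖ + ‖w t₁‖) := by
        simp only [hfdef]; ring
      rw [heq, abs_mul]
      have h3 : |‖w t₂‖ - ‖w t₁‖| ≤ ‖w t₂ - w t₁‖ := abs_norm_sub_norm_le _ _
      have h4 : |‖w t₂‖ + ‖w t₁‖| ≤ 2 * C₀ := by
        rw [abs_of_nonneg (by positivity)]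
        have := hbd t₁ h1; have := hbd t₂ h2; linarith
      calc |‖w t₂‖ - ‖w t₁‖| * |‖w t₂‖ + ‖w t₁‖| ≤ ‖w t₂ - w t₁‖ * (2 * C₀) :=
            mul_le_mul h3 h4 (abs_nonneg _) (norm_nonneg _)
        _ = 2 * C₀ * ‖w t₂ - w t₁‖ := by ring
    have h5 : ‖w t₂ - w t₁‖ ≤ C * |t₂ ^ (-κ) - t₁ ^ (-κ)| := hcau t₁ t₂ h1 h12
    have hpos1 : (0:ℝ) < t₁ := lt_of_lt_of_le one_pos h1
    have hmono : t₂ ^ (-κ) ≤ t₁ ^ (-κ) :=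
      Real.rpow_le_rpow_of_nonpos hpos1 h12 (by linarith)
    have h6 : |t₂ ^ (-κ) - t₁ ^ (-κ)| = t₁ ^ (-κ) - t₂ ^ (-κ) := by
      rw [abs_sub_comm, abs_of_nonneg (by linarith)]
    have h7 : t₁ ^ (-κ) - t₂ ^ (-κ) ≤ t₁ ^ (-κ) := by
      have : (0:ℝ) ≤ t₂ ^ (-κ) := Real.rpow_nonneg (by linarith) _
      linarith
    calc |f t₂ - f t₁| ≤ 2 * C₀ * (C * |t₂ ^ (-κ) - t₁ ^ (-κ)|) :=
          le_trans key (mul_le_mul_of_nonneg_left h5 (by positivity))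
      _ ≤ D * t₁ ^ (-κ) := by
          rw [h6, hD, mul_assoc (2*C₀)]
          exact mul_le_mul_of_nonneg_left (mul_le_mul_of_nonneg_left h7 hC.le)
            (by positivity)
  have hfc : Continuous f := (hdiff.continuous.norm).pow 2
  have hint : ∀ (g : ℝ → ℝ), Continuous g → ∀ a b : ℝ, 1 ≤ a → 1 ≤ b →
      IntervalIntegrable (fun τ => g τ / τ) volume a b := by
    intro g hg a b ha hb
    apply ContinuousOn.intervalIntegrable
    apply hg.continuousOn.div continuousOn_id
    intro x hx
    have : (1:ℝ) ≤ x := le_trans (le_min ha hb) hx.1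
    exact ne_of_gt (lt_of_lt_of_le one_pos this)
  -- rewrite γ
  have hγ' : ∀ t : ℝ, 1 ≤ t →
      γ t = (∫ τ in (1:ℝ)..t, f τ / τ) - f t * Real.log t := by
    intro t ht
    rw [hγ t]
    have h1 : ∀ τ ∈ Set.uIcc (1:ℝ) t, (f τ - f t) / τ = f τ / τ - f t * (1/τ) := by
      intro τ _; rw [sub_div]; ring
    rw [intervalIntegral.integral_congr h1,
      intervalIntegral.integral_sub (hint f hfc 1 t le_rfl ht)
        (((hint (fun _ => 1) continuous_const 1 t le_rfl ht)).const_mul (f t)),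
      intervalIntegral.integral_const_mul]
    have h2 : ∫ τ in (1:ℝ)..t, 1/τ = Real.log t := by
      rw [integral_one_div (by
        intro h
        have : (1:ℝ) ≤ (0:ℝ) := le_trans (le_min le_rfl ht) h.1
        linarith)]
      simp
    rw [h2]
  -- key identity
  have hkey : ∀ s t : ℝ, 1 ≤ s → s ≤ t →
      γ t - γ s = (∫ τ in s..t, (f τ - f t) / τ) + (f s - f t) * Real.log s := by
    intro s t hs hst
    have ht : (1:ℝ) ≤ t := le_trans hs hst
    have hsplit : (∫ τ in (1:ℝ)..s, f τ / τ) + (∫ τ in s..t, f τ / τ)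
        = ∫ τ in (1:ℝ)..t, f τ / τ :=
      intervalIntegral.integral_add_adjacent_intervals (hint f hfc 1 s le_rfl hs)
        (hint f hfc s t hs ht)
    have h1 : ∀ τ ∈ Set.uIcc s t, (f τ - f t) / τ = f τ / τ - f t * (1/τ) := by
      intro τ _; rw [sub_div]; ring
    have h2 : (∫ τ in s..t, (f τ - f t) / τ)
        = (∫ τ in s..t, f τ / τ) - f t * (Real.log t - Real.log s) := by
      rw [intervalIntegral.integral_congr h1,
        intervalIntegral.integral_sub (hint f hfc s t hs ht)
          (((hint (fun _ => 1) continuous_const s t hs ht)).const_mul (f t)),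
        intervalIntegral.integral_const_mul]
      have h3 : ∫ τ in s..t, 1/τ = Real.log (t/s) := by
        apply integral_one_div
        intro h
        have : (1:ℝ) ≤ (0:ℝ) := le_trans (le_min hs ht) h.1
        linarith
      rw [h3, Real.log_div (by linarith) (by linarith)]
    rw [hγ' t ht, hγ' s hs, ← hsplit, h2]
    ring
  -- bound |γ t - γ s|
  set B : ℝ → ℝ := fun s => D / κ * s ^ (-κ) + D * s ^ (-κ) * Real.log s with hBdef
  have hbound : ∀ s t : ℝ, 1 ≤ s → s ≤ t → |γ t - γ s| ≤ B s := by
    intro s t hs hst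
    have ht : (1:ℝ) ≤ t := le_trans hs hst
    have hspos : (0:ℝ) < s := lt_of_lt_of_le one_pos hs
    have h0uIcc : (0:ℝ) ∉ Set.uIcc s t := by
      intro h
      have : (1:ℝ) ≤ (0:ℝ) := le_trans (le_min hs ht) h.1
      linarith
    rw [hkey s t hs hst]
    have hgint : IntervalIntegrable (fun τ => D * τ ^ (-κ - 1)) volume s t :=
      (intervalIntegrable_rpow (Or.inr h0uIcc)).const_mul D
    have hb : ∀ᵐ τ ∂(volume.restrict (Set.uIoc s t)),
        ‖(f τ - f t) / τ‖ ≤ D * τ ^ (-κ - 1) := by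
      rw [Set.uIoc_of_le hst]
      filter_upwards [ae_restrict_mem measurableSet_Ioc] with τ hτ
      have hτ1 : (1:ℝ) ≤ τ := le_trans hs hτ.1.le
      have hτpos : (0:ℝ) < τ := lt_of_lt_of_le one_pos hτ1
      have h1 : |f τ - f t| ≤ D * τ ^ (-κ) := by
        have := hf τ t hτ1 hτ.2
        rwa [abs_sub_comm] at this
      have heq : ‖(f τ - f t) / τ‖ = |f τ - f t| / τ := by
        rw [Real.norm_eq_abs, abs_div, abs_of_pos hτpos]
      rw [heq, div_le_iff₀ hτpos]
      calc |f τ - f t| ≤ D * τ ^ (-κ) := h1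
        _ = D * τ ^ (-κ - 1) * τ := by
            rw [show -κ - 1 = -κ + (-1) by ring, Real.rpow_add hτpos, Real.rpow_neg_one]
            field_simp
    have hIval : (∫ τ in s..t, D * τ ^ (-κ - 1))
        = D * ((s ^ (-κ) - t ^ (-κ)) / κ) := by
      rw [intervalIntegral.integral_const_mul,
        integral_rpow (Or.inr ⟨by intro h; linarith, h0uIcc⟩)]
      have h4 : -κ - 1 + 1 = -κ := by ring
      rw [h4, div_neg, ← neg_div, neg_sub]
    have hmono : t ^ (-κ) ≤ s ^ (-κ) :=
      Real.rpow_le_rpow_of_nonpos hspos hst (by linarith)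
    have htnn : (0:ℝ) ≤ t ^ (-κ) := Real.rpow_nonneg (by linarith) _
    have hI : |∫ τ in s..t, (f τ - f t) / τ| ≤ D / κ * s ^ (-κ) := by
      have h1 := intervalIntegral.norm_integral_le_abs_of_norm_le hb hgint
      rw [Real.norm_eq_abs] at h1
      refine le_trans h1 ?_
      have hnn : (0:ℝ) ≤ (s ^ (-κ) - t ^ (-κ)) / κ := div_nonneg (by linarith) hκ.le
      rw [hIval, abs_of_nonneg (mul_nonneg hD0 hnn)]
      have hDκ : 0 ≤ D / κ := div_nonneg hD0 hκ.le
      calc D * ((s ^ (-κ) - t ^ (-κ)) / κ) = D / κ * (s ^ (-κ) - t ^ (-κ)) := by ring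
        _ ≤ D / κ * s ^ (-κ) := mul_le_mul_of_nonneg_left (by linarith) hDκ
    have hII : |(f s - f t) * Real.log s| ≤ D * s ^ (-κ) * Real.log s := by
      rw [abs_mul, abs_of_nonneg (Real.log_nonneg hs)]
      apply mul_le_mul_of_nonneg_right _ (Real.log_nonneg hs)
      have := hf s t hs hst
      rwa [abs_sub_comm] at this
    calc |(∫ τ in s..t, (f τ - f t) / τ) + (f s - f t) * Real.log s|
        ≤ |∫ τ in s..t, (f τ - f t) / τ| + |(f s - f t) * Real.log s| := abs_add_le _ _
      _ ≤ B s := by rw [hBdef]; exact add_le_add hI hII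
  -- convergence of B along atTop
  have hBtend : Tendsto B atTop (nhds 0) := by
    have h1 : Tendsto (fun x : ℝ => x ^ (-κ)) atTop (nhds 0) := tendsto_rpow_neg_atTop hκ
    have h2 : Tendsto (fun x : ℝ => x ^ (-κ) * Real.log x) atTop (nhds 0) := by
      have h3 : Tendsto (fun x : ℝ => Real.log x / x ^ κ) atTop (nhds 0) :=
        (isLittleO_log_rpow_atTop hκ).tendsto_div_nhds_zero
      apply h3.congr'
      filter_upwards [eventually_gt_atTop (0:ℝ)] with x hx
      rw [Real.rpow_neg hx.le, div_eq_mul_inv, mul_comm]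
    have := ((h1.const_mul (D / κ)).add (h2.const_mul D))
    simpa [hBdef, mul_assoc] using this
  -- Cauchy sequence
  set a : ℕ → ℝ := fun n => γ ((n:ℝ) + 1) with hadef
  have hca : CauchySeq a := by
    refine cauchySeq_of_le_tendsto_0' (fun n => B ((n:ℝ) + 1)) ?_ ?_
    · intro n m hnm
      rw [Real.dist_eq, hadef, abs_sub_comm]
      apply hbound
      · linarith [(Nat.cast_nonneg n : (0:ℝ) ≤ n)]
      · have : (n:ℝ) ≤ m := Nat.cast_le.mpr hnm
        linarith
    · exact hBtend.comp (tendsto_atTop_add_const_right atTop 1 tendsto_natCast_atTop_atTop)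
  obtain ⟨Γ, hΓ⟩ := cauchySeq_tendsto_of_complete hca
  refine ⟨Γ, max (D / κ) D + 1, by positivity, fun s hs => ?_⟩
  have hspos : (0:ℝ) < s := lt_of_lt_of_le one_pos hs
  have hfinal : |γ s - Γ| ≤ B s := by
    have htend : Tendsto (fun n => |γ s - a n|) atTop (nhds |γ s - Γ|) :=
      (tendsto_const_nhds.sub hΓ).abs
    apply le_of_tendsto htend
    filter_upwards [eventually_ge_atTop ⌈s⌉₊] with n hn
    have hsn : s ≤ (n:ℝ) + 1 := by
      have h1 : s ≤ (⌈s⌉₊ : ℝ) := Nat.le_ceil s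
      have h2 : ((⌈s⌉₊ : ℕ) : ℝ) ≤ n := Nat.cast_le.mpr hn
      linarith
    rw [abs_sub_comm]
    exact hbound s ((n:ℝ) + 1) hs hsn
  refine le_trans hfinal ?_
  rw [hBdef]
  have hnn1 : (0:ℝ) ≤ s ^ (-κ) := Real.rpow_nonneg hspos.le _
  have hnn2 : (0:ℝ) ≤ s ^ (-κ) * Real.log s := mul_nonneg hnn1 (Real.log_nonneg hs)
  have hK1 : D / κ ≤ max (D / κ) D + 1 := le_trans (le_max_left _ _) (by linarith)
  have hK2 : D ≤ max (D / κ) D + 1 := le_trans (le_max_right _ _) (by linarith)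
  calc D / κ * s ^ (-κ) + D * s ^ (-κ) * Real.log s
      ≤ (max (D / κ) D + 1) * s ^ (-κ) + (max (D / κ) D + 1) * (s ^ (-κ) * Real.log s) := by
        refine add_le_add (mul_le_mul_of_nonneg_right hK1 hnn1) ?_
        rw [← mul_assoc]
        exact mul_le_mul_of_nonneg_right (mul_le_mul_of_nonneg_right hK2 hnn1)
          (Real.log_nonneg hs)
    _ = (max (D / κ) D + 1) * (s ^ (-κ) * Real.log s + s ^ (-κ)) := by ring
end
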